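/- Let K be a compact subset of ℝ of infinite cardinality with cap(K) ≥ 1. Then for any two polynomials P, Q with integer coefficients whose restrictions to K are distinct functions, one has ‖P − Q‖_K ≥ 1; in other words, the set of integer polynomials is discrete in C⁰(K, ℝ) with the sup norm. -/

import Mathlib

open Polynomial Filter

/-- The sup norm of a real polynomial on a set `K ⊆ ℝ`. -/
noncomputable def supNormOn (K : Set ℝ) (P : Polynomial ℝ) : ℝ :=
  sSup ((fun x => |P.eval x|) '' K)

/-- `m_n(K)`: the infimum of sup norms on `K` of monic real polynomials of degree `n`. -/
noncomputable def chebInf (K : Set ℝ) (n : ℕ) : ℝ :=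
  sInf (supNormOn K '' {P : Polynomial ℝ | P.Monic ∧ P.natDegree = n})

lemma abs_eval_le_supNormOn {K : Set ℝ} (hK : IsCompact K) (f : Polynomial ℝ)
    {x : ℝ} (hx : x ∈ K) : |f.eval x| ≤ supNormOn K f := by
  apply le_csSup
  · exact (hK.image (f.continuous.abs)).bddAbove
  · exact ⟨x, hx, rfl⟩

lemma supNormOn_nonneg {K : Set ℝ} (hK : IsCompact K) (hne : K.Nonempty)
    (f : Polynomial ℝ) : 0 ≤ supNormOn K f := by
  obtain ⟨x, hx⟩ := hne
  exact le_trans (abs_nonneg _) (abs_eval_le_supNormOn hK f hx)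

lemma chebInf_nonneg {K : Set ℝ} (hK : IsCompact K) (hne : K.Nonempty) (n : ℕ) :
    0 ≤ chebInf K n := by
  apply Real.sInf_nonneg
  rintro y ⟨f, -, rfl⟩
  exact supNormOn_nonneg hK hne f

lemma chebInf_le {K : Set ℝ} (hK : IsCompact K) (hne : K.Nonempty) {n : ℕ}
    {f : Polynomial ℝ} (hf : f.Monic) (hd : f.natDegree = n) :
    chebInf K n ≤ supNormOn K f := by
  apply csInf_le
  · exact ⟨0, by rintro y ⟨g, -, rfl⟩; exact supNormOn_nonneg hK hne g⟩
  · exact ⟨f, ⟨hf, hd⟩, rfl⟩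

/-- If `cap(K) ≥ 1`, then any two integer polynomials whose restrictions to `K` are distinct
are at sup-distance at least `1`: `ℤ[T]` is discrete in `C⁰(K, ℝ)`. -/
theorem int_polys_discrete (K : Set ℝ) (hK : IsCompact K) (hKinf : K.Infinite)
    (c : ℝ) (hc : Tendsto (fun n : ℕ => chebInf K n ^ ((n : ℝ)⁻¹)) atTop (nhds c))
    (hcap : 1 ≤ c)
    (P Q : Polynomial ℤ) (hPQ : ∃ x ∈ K, Polynomial.aeval x P ≠ (Polynomial.aeval x Q : ℝ)) :
    1 ≤ supNormOn K ((P - Q).map (Int.castRingHom ℝ)) := by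
  have hne : K.Nonempty := hKinf.nonempty
  set S : Polynomial ℝ := (P - Q).map (Int.castRingHom ℝ) with hSdef
  obtain ⟨x₀, hx₀K, hx₀⟩ := hPQ
  have hS0 : S.eval x₀ ≠ 0 := by
    have : S.eval x₀ = (aeval x₀ P : ℝ) - (aeval x₀ Q : ℝ) := by
      simp only [hSdef, Polynomial.eval_map, Polynomial.eval₂_sub]
      rfl
    rw [this]
    exact sub_ne_zero_of_ne hx₀
  have hSne : S ≠ 0 := fun h => hS0 (by simp [h])
  set M : ℝ := supNormOn K S with hMdef
  have hM0 : 0 ≤ M := supNormOn_nonneg hK hne S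
  by_contra hlt
  push_neg at hlt
  -- all coefficients of S are integer casts
  have hcoeff : ∀ j, ∃ m : ℤ, (m : ℝ) = S.coeff j := by
    intro j
    exact ⟨(P - Q).coeff j, by simp [hSdef]⟩
  set n := S.natDegree with hn
  rcases Nat.eq_zero_or_pos n with hn0 | hnpos
  · -- constant case
    have hSC : S = Polynomial.C (S.coeff 0) := Polynomial.eq_C_of_natDegree_eq_zero hn0
    obtain ⟨m, hm⟩ := hcoeff 0
    have hmne : m ≠ 0 := by
      rintro rfl
      apply hS0
      rw [hSC]; simp [← hm]
    have h1 : (1 : ℝ) ≤ |S.eval x₀| := by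
      rw [hSC, Polynomial.eval_C, ← hm]
      rw [← Int.cast_abs]
      exact_mod_cast Int.one_le_abs hmne
    exact absurd (le_trans h1 (abs_eval_le_supNormOn hK S hx₀K)) (by linarith)
  · -- positive degree case
    set a := S.leadingCoeff with ha
    have hane : a ≠ 0 := Polynomial.leadingCoeff_ne_zero.mpr hSne
    have ha1 : 1 ≤ |a| := by
      obtain ⟨m, hm⟩ := hcoeff n
      have hmne : m ≠ 0 := by rintro rfl; exact hane (by rw [ha, Polynomial.leadingCoeff, ← hn, ← hm]; simp)
      rw [ha, Polynomial.leadingCoeff, ← hn, ← hm, ← Int.cast_abs]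
      exact_mod_cast Int.one_le_abs hmne
    -- key bound: chebInf K (n * k) ≤ M ^ k
    have key : ∀ k : ℕ, 1 ≤ k → chebInf K (n * k) ≤ M ^ k := by
      intro k hk
      set T : Polynomial ℝ := Polynomial.C (a⁻¹ ^ k) * S ^ k with hT
      have hTmonic : T.Monic := by
        unfold Polynomial.Monic
        rw [hT, Polynomial.leadingCoeff_mul, Polynomial.leadingCoeff_C,
          Polynomial.leadingCoeff_pow, ← ha]
        field_simp
        rw [one_div, inv_pow, inv_mul_cancel₀ (pow_ne_zero _ hane)]
      have hTdeg : T.natDegree = n * k := by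
        rw [hT, Polynomial.natDegree_C_mul (by positivity), Polynomial.natDegree_pow, ← hn,
          Nat.mul_comm]
      refine le_trans (chebInf_le hK hne hTmonic hTdeg) ?_
      apply Real.sSup_le
      · rintro y ⟨x, hx, rfl⟩
        have h1 : |S.eval x| ≤ M := abs_eval_le_supNormOn hK S hx
        have h2 : |a⁻¹| ≤ 1 := by
          rw [abs_inv]
          exact inv_le_one_of_one_le₀ ha1
        show |T.eval x| ≤ M ^ k
        have : |T.eval x| = |a⁻¹| ^ k * |S.eval x| ^ k := by
          rw [hT, Polynomial.eval_mul, Polynomial.eval_C, Polynomial.eval_pow, abs_mul,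
            abs_pow, abs_pow]
        rw [this]
        calc |a⁻¹| ^ k * |S.eval x| ^ k ≤ 1 ^ k * M ^ k := by
              apply mul_le_mul
              · exact pow_le_pow_left₀ (abs_nonneg _) h2 k
              · exact pow_le_pow_left₀ (abs_nonneg _) h1 k
              · positivity
              · positivity
          _ = M ^ k := by ring
      · positivity
    -- pass to the limit
    have htend : Tendsto (fun k : ℕ => chebInf K (n * k) ^ (((n * k : ℕ) : ℝ))⁻¹)
        atTop (nhds c) := by
      apply hc.comp
      apply tendsto_atTop_mono (fun k => Nat.le_mul_of_pos_left k hnpos) tendsto_id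
    have hbound : ∀ᶠ k : ℕ in atTop,
        chebInf K (n * k) ^ (((n * k : ℕ) : ℝ))⁻¹ ≤ M ^ ((n : ℝ))⁻¹ := by
      filter_upwards [eventually_ge_atTop 1] with k hk
      have h1 : chebInf K (n * k) ^ (((n * k : ℕ) : ℝ))⁻¹ ≤ (M ^ k) ^ (((n * k : ℕ) : ℝ))⁻¹ :=
        Real.rpow_le_rpow (chebInf_nonneg hK hne _) (key k hk) (by positivity)
      refine h1.trans_eq ?_
      rw [← Real.rpow_natCast M k, ← Real.rpow_mul hM0]
      congr 1
      have hkne : (k : ℝ) ≠ 0 := Nat.cast_ne_zero.mpr (by omega)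
      have hnne : (n : ℝ) ≠ 0 := Nat.cast_ne_zero.mpr hnpos.ne'
      push_cast
      field_simp
    have hcle : c ≤ M ^ ((n : ℝ))⁻¹ := le_of_tendsto htend hbound
    have : M ^ ((n : ℝ))⁻¹ < 1 :=
      Real.rpow_lt_one hM0 hlt (by positivity)
    linarith
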